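/- Let k° be a height-one valuation ring with fraction field k, 0 ≠ π ∈ k°, and A = k°[t_0,…,t_l]/(t_0⋯t_m − π) with 0 ≤ m ≤ l. Every element a of A admits a unique representation a = Σ_{n ∈ ℤ^m × ℕ^{l−m}} a_n t^n (where t_0 is replaced by π t_1^{-1}⋯t_m^{-1} when negative exponents appear) such that |a_n| ≤ |π|^{−min(0, n_1,…,n_m)} for all n. -/

import Mathlib

open scoped NNReal
open MvPolynomial

noncomputable section

namespace Altered

variable {k : Type*} [Field k]

/-- The defining ideal (t₀⋯t_m - π) of a model semistable scheme. -/
def modelIdeal (v : Valuation k ℝ≥0) (l m : ℕ) (π : v.integer) :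
    Ideal (MvPolynomial (Fin (l + 1)) v.integer) :=
  Ideal.span
    {(∏ i ∈ Finset.univ.filter (fun i : Fin (l + 1) => (i : ℕ) ≤ m), X i) - C π}

/-- The coordinate ring A = k°[t₀,…,t_l]/(t₀⋯t_m − π) of a model semistable scheme. -/
abbrev ModelRing (v : Valuation k ℝ≥0) (l m : ℕ) (π : v.integer) :=
  MvPolynomial (Fin (l + 1)) v.integer ⧸ modelIdeal v l m π

variable (v : Valuation k ℝ≥0) (l m : ℕ) (π : v.integer)

/-- An exponent tuple n ∈ ℤ^m × ℕ^(l-m): index j : Fin l stands for the variable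
t_{j+1}, and exponents of t_{j+1} for j ≥ m must be nonnegative. -/
def IsSpecialIndex (n : Fin l → ℤ) : Prop := ∀ j : Fin l, m ≤ (j : ℕ) → 0 ≤ n j

/-- D(n) = −min(0, n₁,…,n_m). -/
def negDeg (n : Fin l → ℤ) : ℕ :=
  (Finset.univ.filter (fun j : Fin l => (j : ℕ) < m)).sup fun j => (-n j).toNat

/-- The special monomial a_n t^n with coefficient a_n = b·π^{D(n)}
(so that the bound |a_n| ≤ |π|^{−min(0,n₁,…,n_m)} holds automatically),
written as an honest element of A: b·π^{D}·t^n = b·t₀^D·∏_{1≤i≤m} t_i^{n_i+D}·∏_{i>m} t_i^{n_i}. -/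
def specialMonomial (b : v.integer) (n : Fin l → ℤ) : ModelRing v l m π :=
  Ideal.Quotient.mk (modelIdeal v l m π)
    (C b * X (0 : Fin (l + 1)) ^ negDeg l m n *
      ∏ j : Fin l, X j.succ ^
        (if (j : ℕ) < m then (n j + negDeg l m n).toNat else (n j).toNat))

/-- The set Δ of monomial semivaluation parameters:
r ∈ [0,1]^{l+1} with r₀⋯r_m = |π|. -/
def Delta : Set (Fin (l + 1) → ℝ≥0) :=
  {r | (∀ i, r i ≤ 1) ∧
    ∏ i ∈ Finset.univ.filter (fun i : Fin (l + 1) => (i : ℕ) ≤ m), r i = v (π : k)}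

/-- The value |a_n t^n|_r = |a_n|·r^n of the special monomial with coefficient
a_n = b·π^{D(n)} at r ∈ Δ.  (On Δ, r_i ≠ 0 whenever a negative exponent occurs.) -/
def monValue (b : v.integer) (n : Fin l → ℤ) (r : Fin (l + 1) → ℝ≥0) : ℝ≥0 :=
  v (b : k) * v (π : k) ^ (negDeg l m n : ℤ) * ∏ j : Fin l, r j.succ ^ (n j)

end Altered

namespace Altered

section Aux

variable {k : Type*} [Field k] (v : Valuation k ℝ≥0) (l m : ℕ) (π : v.integer)

open Finset

/-- The exponent Finsupp of the monomial X₀⋯X_m. -/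
def uExp : Fin (l + 1) →₀ ℕ :=
  ∑ i ∈ Finset.univ.filter (fun i : Fin (l + 1) => (i : ℕ) ≤ m), Finsupp.single i 1

lemma uExp_apply (i : Fin (l + 1)) : uExp l m i = if (i : ℕ) ≤ m then 1 else 0 := by
  classical
  rw [uExp, Finsupp.finset_sum_apply]
  simp only [Finsupp.single_apply]
  rw [Finset.sum_ite_eq' (Finset.univ.filter (fun i : Fin (l + 1) => (i : ℕ) ≤ m)) i
    (fun _ => (1 : ℕ))]
  simp

lemma prod_X_filter :
    (∏ i ∈ Finset.univ.filter (fun i : Fin (l + 1) => (i : ℕ) ≤ m),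
      (X i : MvPolynomial (Fin (l + 1)) v.integer)) = monomial (uExp l m) 1 := by
  rw [uExp]
  induction Finset.univ.filter (fun i : Fin (l + 1) => (i : ℕ) ≤ m) using
      Finset.cons_induction with
  | empty => simp
  | cons i s hi ih =>
      rw [Finset.prod_cons, Finset.sum_cons, ih,
        show (X i : MvPolynomial (Fin (l + 1)) v.integer) =
          monomial (Finsupp.single i 1) 1 from rfl, monomial_mul, one_mul]

lemma mk_monomial_add_uExp (f : Fin (l + 1) →₀ ℕ) (s : v.integer) :
    Ideal.Quotient.mk (modelIdeal v l m π) (monomial (f + uExp l m) s) =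
      Ideal.Quotient.mk (modelIdeal v l m π) (monomial f (π * s)) := by
  rw [Ideal.Quotient.eq, modelIdeal]
  refine Ideal.mem_span_singleton.mpr ⟨monomial f s, ?_⟩
  rw [prod_X_filter v l m, sub_mul, monomial_mul, one_mul, add_comm (uExp l m) f,
    C_mul_monomial]

lemma mk_monomial_add_smul_uExp (d : ℕ) (f : Fin (l + 1) →₀ ℕ) (s : v.integer) :
    Ideal.Quotient.mk (modelIdeal v l m π) (monomial (f + d • uExp l m) s) =
      Ideal.Quotient.mk (modelIdeal v l m π) (monomial f (π ^ d * s)) := by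
  induction d generalizing s with
  | zero => simp
  | succ d ih =>
      have h1 : f + (d + 1) • uExp l m = (f + d • uExp l m) + uExp l m := by
        rw [add_assoc, succ_nsmul]
      rw [h1, mk_monomial_add_uExp, ih (π * s),
        show π ^ d * (π * s) = π ^ (d + 1) * s by ring]

/-- The exponent Finsupp of the special monomial t^n. -/
def fExp (n : Fin l → ℤ) : Fin (l + 1) →₀ ℕ :=
  Finsupp.equivFunOnFinite.symm
    (Fin.cases (negDeg l m n)
      (fun j => if (j : ℕ) < m then (n j + negDeg l m n).toNat else (n j).toNat))

@[simp] lemma fExp_zero (n : Fin l → ℤ) : fExp l m n 0 = negDeg l m n := rfl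

@[simp] lemma fExp_succ (n : Fin l → ℤ) (j : Fin l) :
    fExp l m n j.succ = if (j : ℕ) < m then (n j + negDeg l m n).toNat else (n j).toNat := by
  simp [fExp]

lemma monomial_eq_prod (s : Fin (l + 1) →₀ ℕ) (a : v.integer) :
    (monomial s a : MvPolynomial (Fin (l + 1)) v.integer) = C a * ∏ i, X i ^ s i := by
  rw [monomial_eq]
  congr 1
  rw [Finsupp.prod]
  refine Finset.prod_subset (Finset.subset_univ _) ?_
  intro i _ h
  rw [Finsupp.notMem_support_iff.mp h, pow_zero]

lemma specialMonomial_eq_mk (b : v.integer) (n : Fin l → ℤ) :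
    specialMonomial v l m π b n =
      Ideal.Quotient.mk (modelIdeal v l m π) (monomial (fExp l m n) b) := by
  rw [specialMonomial]
  congr 1
  rw [monomial_eq_prod, Fin.prod_univ_succ, fExp_zero]
  simp only [fExp_succ]
  ring

/-- The special index associated to an ordinary monomial exponent. -/
def nIdx (e : Fin (l + 1) →₀ ℕ) : Fin l → ℤ :=
  fun j => if (j : ℕ) < m then (e j.succ : ℤ) - e 0 else (e j.succ : ℤ)

lemma nIdx_apply (e : Fin (l + 1) →₀ ℕ) (j : Fin l) :
    nIdx l m e j = if (j : ℕ) < m then (e j.succ : ℤ) - e 0 else (e j.succ : ℤ) := rfl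

lemma nIdx_special (e : Fin (l + 1) →₀ ℕ) : IsSpecialIndex l m (nIdx l m e) := by
  intro j hj
  rw [nIdx_apply, if_neg (by omega)]
  positivity

lemma negDeg_nIdx_le (e : Fin (l + 1) →₀ ℕ) : negDeg l m (nIdx l m e) ≤ e 0 := by
  refine Finset.sup_le fun j hj => ?_
  rw [Finset.mem_filter] at hj
  rw [nIdx_apply, if_pos hj.2]
  omega

lemma negDeg_nIdx_ge (e : Fin (l + 1) →₀ ℕ) (j : Fin l) (hj : (j : ℕ) < m) :
    (e 0 : ℤ) - e j.succ ≤ negDeg l m (nIdx l m e) := by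
  have hmem : j ∈ Finset.univ.filter (fun j : Fin l => (j : ℕ) < m) :=
    Finset.mem_filter.mpr ⟨Finset.mem_univ j, hj⟩
  have h2 : (-(nIdx l m e j)).toNat ≤ negDeg l m (nIdx l m e) :=
    Finset.le_sup (f := fun j => (-(nIdx l m e j)).toNat) hmem
  rw [nIdx_apply, if_pos hj] at h2
  omega

lemma exp_decomp (e : Fin (l + 1) →₀ ℕ) :
    e = fExp l m (nIdx l m e) + (e 0 - negDeg l m (nIdx l m e)) • uExp l m := by
  have hle := negDeg_nIdx_le l m e
  ext i
  rw [Finsupp.add_apply, Finsupp.smul_apply, uExp_apply, smul_eq_mul]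
  induction i using Fin.cases with
  | zero =>
      rw [fExp_zero, if_pos (by simp)]
      omega
  | succ j =>
      rw [fExp_succ]
      have hsucc : ((j.succ : Fin (l+1)) : ℕ) = (j : ℕ) + 1 := rfl
      by_cases hj : (j : ℕ) < m
      · have hge := negDeg_nIdx_ge l m e j hj
        rw [if_pos hj, if_pos (by omega), nIdx_apply, if_pos hj]
        omega
      · rw [if_neg hj, if_neg (by omega), nIdx_apply, if_neg hj]
        omega

lemma mk_monomial_eq_special (e : Fin (l + 1) →₀ ℕ) (r : v.integer) :
    Ideal.Quotient.mk (modelIdeal v l m π) (monomial e r) =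
      specialMonomial v l m π (π ^ (e 0 - negDeg l m (nIdx l m e)) * r) (nIdx l m e) := by
  rw [specialMonomial_eq_mk]
  conv_lhs => rw [exp_decomp l m e]
  exact mk_monomial_add_smul_uExp v l m π _ _ _

lemma specialMonomial_zero (n : Fin l → ℤ) : specialMonomial v l m π 0 n = 0 := by
  simp [specialMonomial]

lemma specialMonomial_add (b b' : v.integer) (n : Fin l → ℤ) :
    specialMonomial v l m π (b + b') n =
      specialMonomial v l m π b n + specialMonomial v l m π b' n := by
  rw [specialMonomial, specialMonomial, specialMonomial, C_add, add_mul, add_mul,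
    RingHom.map_add]

end Aux


section Uniq

variable {k : Type*} [Field k] (v : Valuation k ℝ≥0) (l m : ℕ) (π : v.integer)

def wVec : Fin l → ℤ := fun j => if (j : ℕ) < m then -1 else 0

def dVec (j : Fin l) : Fin l → ℤ := fun j' => if j' = j then 1 else 0

/-- values of the variables under the embedding into Laurent polynomials over k. -/
def psiFun : Fin (l + 1) → AddMonoidAlgebra k (Fin l → ℤ) :=
  Fin.cases (motive := fun _ => AddMonoidAlgebra k (Fin l → ℤ))
    (AddMonoidAlgebra.single (wVec l m) (π : k))
    (fun j => AddMonoidAlgebra.single (dVec l j) 1)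

@[simp] lemma psiFun_zero :
    psiFun v l m π 0 = AddMonoidAlgebra.single (wVec l m) (π : k) := rfl

@[simp] lemma psiFun_succ (j : Fin l) :
    psiFun v l m π j.succ = AddMonoidAlgebra.single (dVec l j) 1 := by
  simp [psiFun]

lemma psi_gen :
    aeval (psiFun v l m π)
      ((∏ i ∈ Finset.univ.filter (fun i : Fin (l + 1) => (i : ℕ) ≤ m),
        (X i : MvPolynomial (Fin (l + 1)) v.integer)) - C π) = 0 := by
  classical
  rw [map_sub, map_prod, aeval_C]
  simp only [aeval_X]
  rw [Finset.prod_filter, Fin.prod_univ_succ]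
  simp only [psiFun_zero, psiFun_succ, Fin.val_zero, Fin.val_succ, Nat.zero_le, if_true]
  have h1 : ∀ (j : Fin l), (if (j : ℕ) + 1 ≤ m then
      AddMonoidAlgebra.single (dVec l j) (1 : k) else 1) =
      AddMonoidAlgebra.single (if (j : ℕ) + 1 ≤ m then dVec l j else 0) 1 := by
    intro j; split
    · rfl
    · rw [AddMonoidAlgebra.one_def]
  simp only [h1]
  rw [AddMonoidAlgebra.prod_single]
  simp only [Finset.prod_const_one]
  rw [AddMonoidAlgebra.single_mul_single, mul_one, AddMonoidAlgebra.coe_algebraMap]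
  simp only [Function.comp_apply]
  have h2 : (algebraMap ↥v.integer k) π = (π : k) := rfl
  rw [h2, sub_eq_zero]
  congr 1
  funext j₀
  rw [Pi.add_apply, Finset.sum_apply]
  have h3 : ∀ j : Fin l,
      (if (j : ℕ) + 1 ≤ m then dVec l j else 0) j₀ =
      if j = j₀ then (if (j₀ : ℕ) + 1 ≤ m then (1 : ℤ) else 0) else 0 := by
    intro j
    rw [apply_ite (fun f : Fin l → ℤ => f j₀)]
    simp only [Pi.zero_apply, dVec]
    rcases eq_or_ne j j₀ with rfl | hne
    · simp
    · simp [hne, Ne.symm hne]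
  simp only [h3]
  rw [Finset.sum_ite_eq']
  simp only [Finset.mem_univ, if_true, Pi.zero_apply, wVec]
  by_cases hj : (j₀ : ℕ) < m
  · rw [if_pos hj, if_pos (by omega)]; ring
  · rw [if_neg hj, if_neg (by omega)]; ring

/-- The embedding A → k[(Fin l → ℤ)] into Laurent polynomials over k. -/
def psiA : ModelRing v l m π →ₐ[v.integer] AddMonoidAlgebra k (Fin l → ℤ) :=
  Ideal.Quotient.liftₐ (modelIdeal v l m π) (aeval (psiFun v l m π)) (by
    intro x hx
    rw [modelIdeal] at hx
    obtain ⟨y, rfl⟩ := Ideal.mem_span_singleton.mp hx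
    rw [map_mul, psi_gen, zero_mul])

lemma psiA_mk (x : MvPolynomial (Fin (l + 1)) v.integer) :
    psiA v l m π (Ideal.Quotient.mk (modelIdeal v l m π) x) = aeval (psiFun v l m π) x := by
  rw [psiA, Ideal.Quotient.liftₐ_apply]
  rfl

lemma psiA_special (b : v.integer) (n : Fin l → ℤ) (hn : IsSpecialIndex l m n) :
    psiA v l m π (specialMonomial v l m π b n) =
      AddMonoidAlgebra.single n ((b : k) * (π : k) ^ (negDeg l m n)) := by
  classical
  rw [specialMonomial, psiA_mk, map_mul, map_mul, map_pow, map_prod, aeval_C]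
  simp only [map_pow, aeval_X, psiFun_zero, psiFun_succ, AddMonoidAlgebra.single_pow, one_pow]
  rw [AddMonoidAlgebra.prod_single]
  simp only [Finset.prod_const_one]
  rw [AddMonoidAlgebra.coe_algebraMap]
  simp only [Function.comp_apply]
  rw [AddMonoidAlgebra.single_mul_single, AddMonoidAlgebra.single_mul_single]
  have h2 : (algebraMap ↥v.integer k) b = (b : k) := rfl
  rw [h2, mul_one]
  congr 1
  funext j₀
  rw [Pi.add_apply, Pi.add_apply, Finset.sum_apply]
  have h3 : ∀ j : Fin l,
      ((if (j : ℕ) < m then (n j + negDeg l m n).toNat else (n j).toNat) • dVec l j) j₀ =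
      if j = j₀ then
        ((if (j₀ : ℕ) < m then (n j₀ + negDeg l m n).toNat else (n j₀).toNat) : ℤ) else 0 := by
    intro j
    rw [Pi.smul_apply]
    simp only [dVec, smul_ite, smul_zero]
    rcases eq_or_ne j j₀ with rfl | hne
    · simp
    · simp [hne, Ne.symm hne]
  simp only [h3]
  rw [Finset.sum_ite_eq']
  simp only [Finset.mem_univ, if_true, Pi.zero_apply, Pi.smul_apply, wVec, smul_ite,
    nsmul_eq_mul, smul_zero, mul_neg, mul_one]
  by_cases hj : (j₀ : ℕ) < m
  · have hmem : j₀ ∈ Finset.univ.filter (fun j : Fin l => (j : ℕ) < m) :=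
      Finset.mem_filter.mpr ⟨Finset.mem_univ j₀, hj⟩
    have hD : (-n j₀).toNat ≤ negDeg l m n :=
      Finset.le_sup (f := fun j => (-n j).toNat) hmem
    rw [if_pos hj, if_pos hj]
    omega
  · have h0 : 0 ≤ n j₀ := hn j₀ (by omega)
    rw [if_neg hj, if_neg hj]
    omega

lemma coeff_sum_special (c : (Fin l → ℤ) →₀ v.integer) (n₀ : Fin l → ℤ) :
    (∑ n ∈ c.support,
      (AddMonoidAlgebra.single n ((c n : k) * (π : k) ^ (negDeg l m n)) :
        AddMonoidAlgebra k (Fin l → ℤ))).coeff n₀ =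
      (c n₀ : k) * (π : k) ^ (negDeg l m n₀) := by
  classical
  rw [AddMonoidAlgebra.coeff_sum, Finset.sum_apply']
  simp only [AddMonoidAlgebra.coeff_single, Finsupp.single_apply]
  rw [Finset.sum_ite_eq' c.support n₀ (fun n => (c n : k) * (π : k) ^ (negDeg l m n))]
  split
  · rfl
  · rw [Finsupp.notMem_support_iff.mp (by assumption)]
    simp

end Uniq

lemma sum_support_special_eq {k : Type*} [Field k] (v : Valuation k ℝ≥0) (l m : ℕ)
    (π : v.integer) (c : (Fin l → ℤ) →₀ v.integer) :
    ∑ n ∈ c.support, specialMonomial v l m π (c n) n =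
      c.sum (fun n b => specialMonomial v l m π b n) := rfl

lemma exists_special {k : Type*} [Field k] (v : Valuation k ℝ≥0) (l m : ℕ) (π : v.integer)
    (a : ModelRing v l m π) :
    ∃ c : (Fin l → ℤ) →₀ v.integer,
      (∀ n ∈ c.support, IsSpecialIndex l m n) ∧
      a = ∑ n ∈ c.support, specialMonomial v l m π (c n) n := by
  classical
  obtain ⟨p, rfl⟩ := Ideal.Quotient.mk_surjective a
  induction p using MvPolynomial.induction_on' with
  | monomial e r =>
      refine ⟨Finsupp.single (nIdx l m e) (π ^ (e 0 - negDeg l m (nIdx l m e)) * r), ?_, ?_⟩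
      · intro n hn
        have h := Finsupp.support_single_subset hn
        rw [Finset.mem_singleton] at h
        subst h
        exact nIdx_special l m e
      · rw [mk_monomial_eq_special, sum_support_special_eq]
        exact (Finsupp.sum_single_index (h := fun n b => specialMonomial v l m π b n)
          (specialMonomial_zero v l m π _)).symm
  | add p q hp hq =>
      obtain ⟨c₁, hs₁, he₁⟩ := hp
      obtain ⟨c₂, hs₂, he₂⟩ := hq
      refine ⟨c₁ + c₂, ?_, ?_⟩
      · intro n hn
        rcases Finset.mem_union.mp (Finsupp.support_add hn) with h | h
        · exact hs₁ n h
        · exact hs₂ n h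
      · rw [RingHom.map_add, he₁, he₂, sum_support_special_eq, sum_support_special_eq,
          sum_support_special_eq,
          Finsupp.sum_add_index' (fun n => specialMonomial_zero v l m π n)
            (fun n b b' => specialMonomial_add v l m π b b' n)]

lemma special_repr_unique {k : Type*} [Field k] (v : Valuation k ℝ≥0) (l m : ℕ)
    (π : v.integer) (hπ : π ≠ 0) (a : ModelRing v l m π)
    (c c' : (Fin l → ℤ) →₀ v.integer)
    (h : (∀ n ∈ c.support, IsSpecialIndex l m n) ∧
      a = ∑ n ∈ c.support, specialMonomial v l m π (c n) n)
    (h' : (∀ n ∈ c'.support, IsSpecialIndex l m n) ∧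
      a = ∑ n ∈ c'.support, specialMonomial v l m π (c' n) n) : c = c' := by
  classical
  have hk : ∀ (c : (Fin l → ℤ) →₀ v.integer),
      (∀ n ∈ c.support, IsSpecialIndex l m n) →
      a = ∑ n ∈ c.support, specialMonomial v l m π (c n) n →
      ∀ n₀ : Fin l → ℤ, (psiA v l m π a).coeff n₀ = (c n₀ : k) * (π : k) ^ (negDeg l m n₀) := by
    intro c hs he n₀
    rw [he, map_sum,
      Finset.sum_congr rfl (fun n hn => psiA_special v l m π (c n) n (hs n hn))]
    exact coeff_sum_special v l m π c n₀
  have hπk : (π : k) ≠ 0 := fun hc => hπ (Subtype.ext hc)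
  ext n₀
  have e1 := hk c h.1 h.2 n₀
  have e2 := hk c' h'.1 h'.2 n₀
  have e3 : (c n₀ : k) * (π : k) ^ (negDeg l m n₀) =
      (c' n₀ : k) * (π : k) ^ (negDeg l m n₀) := e1.symm.trans e2
  have hcc : (c n₀ : k) = (c' n₀ : k) := mul_right_cancel₀ (pow_ne_zero _ hπk) e3
  exact_mod_cast hcc

theorem exists_unique_special_representation
    {k : Type*} [Field k] (v : Valuation k ℝ≥0)
    (hv : ∃ x : k, v x ≠ 0 ∧ v x ≠ 1)
    (l m : ℕ) (hm : m ≤ l) (π : v.integer) (hπ : π ≠ 0)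
    (a : ModelRing v l m π) :
    ∃! c : (Fin l → ℤ) →₀ v.integer,
      (∀ n ∈ c.support, IsSpecialIndex l m n) ∧
      a = ∑ n ∈ c.support, specialMonomial v l m π (c n) n := by
  obtain ⟨c, hc⟩ := exists_special v l m π a
  exact ⟨c, hc, fun c' hc' => special_repr_unique v l m π hπ a c' c hc' hc⟩

end Altered
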